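/- For every p ∈ P², all r, r' ∈ P², and each i ∈ {H, L}, the map r ↦ G_i(p, r) is Lipschitz with constant l_r = (1/4)·√(c_H² + c_L²); that is, |G_i(p, r) − G_i(p, r')| ≤ l_r·‖r − r'‖₂. -/

import Mathlib

open Real Filter

/-- Deterministic utility u_i(p_i, r_i) = a_i - b_i * p_i + c_i * (r_i - p_i). -/
noncomputable def util (a b c pi ri : ℝ) : ℝ := a - b * pi + c * (ri - pi)

/-- MNL demand of product H. -/
noncomputable def demH (aH aL bH bL cH cL : ℝ) (p r : ℝ × ℝ) : ℝ :=
  Real.exp (util aH bH cH p.1 r.1) /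
    (1 + Real.exp (util aH bH cH p.1 r.1) + Real.exp (util aL bL cL p.2 r.2))

/-- MNL demand of product L. -/
noncomputable def demL (aH aL bH bL cH cL : ℝ) (p r : ℝ × ℝ) : ℝ :=
  Real.exp (util aL bL cL p.2 r.2) /
    (1 + Real.exp (util aH bH cH p.1 r.1) + Real.exp (util aL bL cL p.2 r.2))

/-- Scaled derivative of the log-revenue of firm H. -/
noncomputable def GrH (aH aL bH bL cH cL : ℝ) (p r : ℝ × ℝ) : ℝ :=
  1 / ((bH + cH) * p.1) + demH aH aL bH bL cH cL p r - 1

/-- Scaled derivative of the log-revenue of firm L. -/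
noncomputable def GrL (aH aL bH bL cH cL : ℝ) (p r : ℝ × ℝ) : ℝ :=
  1 / ((bL + cL) * p.2) + demL aH aL bH bL cH cL p r - 1

/-- Stationary Nash equilibrium: positive price vector on which both scaled
derivatives vanish at price = reference price. -/
def IsSNE (aH aL bH bL cH cL : ℝ) (p : ℝ × ℝ) : Prop :=
  0 < p.1 ∧ 0 < p.2 ∧ GrH aH aL bH bL cH cL p p = 0 ∧ GrL aH aL bH bL cH cL p p = 0

/-- Projection onto the interval [lo, hi]. -/
noncomputable def proj (lo hi x : ℝ) : ℝ := min (max x lo) hi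

/-- Membership of a price vector in P² = [lo, hi]². -/
def InP2 (lo hi : ℝ) (x : ℝ × ℝ) : Prop := x.1 ∈ Set.Icc lo hi ∧ x.2 ∈ Set.Icc lo hi

/-- Squared Euclidean norm on ℝ². -/
noncomputable def norm2sq (x : ℝ × ℝ) : ℝ := x.1 ^ 2 + x.2 ^ 2

/-- The OPGA dynamics for price path `pp` and reference-price path `rr`. -/
def OPGA (aH aL bH bL cH cL lo hi alpha : ℝ) (eta : ℕ → ℝ) (pp rr : ℕ → ℝ × ℝ) : Prop :=
  (∀ t, (pp (t+1)).1 =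
      proj lo hi ((pp t).1 + eta t * (bH + cH) * GrH aH aL bH bL cH cL (pp t) (rr t))) ∧
  (∀ t, (pp (t+1)).2 =
      proj lo hi ((pp t).2 + eta t * (bL + cL) * GrL aH aL bH bL cH cL (pp t) (rr t))) ∧
  (∀ t, (rr (t+1)).1 = alpha * (rr t).1 + (1 - alpha) * (pp t).1) ∧
  (∀ t, (rr (t+1)).2 = alpha * (rr t).2 + (1 - alpha) * (pp t).2)

/-- The weighted ℓ¹ distance to the SNE. -/
noncomputable def wdist (bH bL cH cL : ℝ) (pstar p : ℝ × ℝ) : ℝ :=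
  |pstar.1 - p.1| / (bH + cH) + |pstar.2 - p.2| / (bL + cL)

/-- The function 𝒢(p) = sign(p_H** − p_H)·G_H(p,p) + sign(p_L** − p_L)·G_L(p,p). -/
noncomputable def calG (aH aL bH bL cH cL : ℝ) (pstar p : ℝ × ℝ) : ℝ :=
  Real.sign (pstar.1 - p.1) * GrH aH aL bH bL cH cL p p +
  Real.sign (pstar.2 - p.2) * GrL aH aL bH bL cH cL p p

/-- The function ℋ(p) used in the local analysis around the SNE. -/
noncomputable def calH (aH aL bH bL cH cL : ℝ) (pstar p : ℝ × ℝ) : ℝ :=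
  (bH + cH) * GrH aH aL bH bL cH cL p p * (pstar.1 - p.1) +
  (bL + cL) * GrL aH aL bH bL cH cL p p * (pstar.2 - p.2)

/-- The constant M_G bounding |G_i| on P². -/
noncomputable def MG (bH bL cH cL lo : ℝ) : ℝ :=
  max (1 / ((bH + cH) * lo)) (1 / ((bL + cL) * lo)) + 1

/-- The Lipschitz constant l_r = (1/4)·√(c_H² + c_L²). -/
noncomputable def lr (cH cL : ℝ) : ℝ := (1 / 4) * Real.sqrt (cH ^ 2 + cL ^ 2)


lemma mnl_diff_bound (A1 A2 k1 k2 : ℝ) :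
    |Real.exp (A1 + k1) / (1 + Real.exp (A1 + k1) + Real.exp (A2 + k2)) -
      Real.exp A1 / (1 + Real.exp A1 + Real.exp A2)| ≤ (|k1| + |k2|) / 4 := by
  set g : ℝ → ℝ := fun t => Real.exp (A1 + k1*t) / (1 + Real.exp (A1+k1*t) + Real.exp (A2+k2*t)) with hg
  set g' : ℝ → ℝ := fun t =>
    (k1 * Real.exp (A1+k1*t) * (1 + Real.exp (A2+k2*t))
      - k2 * Real.exp (A1+k1*t) * Real.exp (A2+k2*t))
      / (1 + Real.exp (A1+k1*t) + Real.exp (A2+k2*t))^2 with hg'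
  have hderiv : ∀ t : ℝ, HasDerivAt g (g' t) t := by
    intro t
    have h1 : HasDerivAt (fun t : ℝ => A1 + k1*t) k1 t := by
      simpa [Pi.add_def] using (hasDerivAt_const t A1).add ((hasDerivAt_id t).const_mul k1)
    have h2 : HasDerivAt (fun t : ℝ => A2 + k2*t) k2 t := by
      simpa [Pi.add_def] using (hasDerivAt_const t A2).add ((hasDerivAt_id t).const_mul k2)
    have e1 := h1.exp
    have e2 := h2.exp
    have hD : HasDerivAt (fun t : ℝ => 1 + Real.exp (A1+k1*t) + Real.exp (A2+k2*t))
        (Real.exp (A1+k1*t) * k1 + Real.exp (A2+k2*t) * k2) t := by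
      simpa [Pi.add_def] using ((hasDerivAt_const t (1:ℝ)).add e1).add e2
    have hD0 : (1 + Real.exp (A1+k1*t) + Real.exp (A2+k2*t)) ≠ 0 := by positivity
    have h := e1.div hD hD0
    have heq : g' t = (Real.exp (A1+k1*t) * k1 * (1 + Real.exp (A1+k1*t) + Real.exp (A2+k2*t)) -
        Real.exp (A1+k1*t) * (Real.exp (A1+k1*t) * k1 + Real.exp (A2+k2*t) * k2)) /
      (1 + Real.exp (A1+k1*t) + Real.exp (A2+k2*t)) ^ 2 := by
      simp only [hg']; ring
    rw [heq]; exact h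
  have hbound : ∀ t : ℝ, ‖g' t‖ ≤ (|k1| + |k2|) / 4 := by
    intro t
    set E1 := Real.exp (A1+k1*t) with hE1
    set E2 := Real.exp (A2+k2*t) with hE2
    have hE1p : 0 < E1 := Real.exp_pos _
    have hE2p : 0 < E2 := Real.exp_pos _
    have hS : (0:ℝ) < 1 + E1 + E2 := by linarith
    rw [Real.norm_eq_abs, hg']
    rw [abs_div, abs_of_pos (by positivity : (0:ℝ) < (1+E1+E2)^2)]
    rw [div_le_div_iff₀ (by positivity) (by norm_num)]
    have habs : |k1 * E1 * (1+E2) - k2 * E1 * E2| ≤ |k1| * (E1*(1+E2)) + |k2| * (E1*E2) := by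
      calc |k1 * E1 * (1+E2) - k2 * E1 * E2|
          ≤ |k1 * E1 * (1+E2)| + |k2 * E1 * E2| := abs_sub _ _
        _ = |k1| * (E1*(1+E2)) + |k2| * (E1*E2) := by
            rw [abs_mul, abs_mul, abs_mul, abs_mul,
              abs_of_pos hE1p, abs_of_pos hE2p, abs_of_pos (by linarith : (0:ℝ) < 1+E2)]
            ring
    have h1 : |k1| * (E1*(1+E2)) * 4 ≤ |k1| * (1+E1+E2)^2 := by
      have := mul_nonneg (abs_nonneg k1) (sq_nonneg (1+E2-E1))
      nlinarith
    have h2 : |k2| * (E1*E2) * 4 ≤ |k2| * (1+E1+E2)^2 := by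
      have := mul_nonneg (abs_nonneg k2) (sq_nonneg (E1-E2))
      have h3 := mul_nonneg (abs_nonneg k2) hE1p.le
      have h4 := mul_nonneg (abs_nonneg k2) hE2p.le
      nlinarith
    nlinarith
  have key : ‖g 1 - g 0‖ ≤ ((|k1| + |k2|) / 4) * ‖(1:ℝ) - 0‖ := by
    apply Convex.norm_image_sub_le_of_norm_hasDerivWithin_le
      (fun x _ => (hderiv x).hasDerivWithinAt) (fun x _ => hbound x)
      convex_univ (Set.mem_univ 0) (Set.mem_univ 1)
  simp only [hg] at key
  norm_num at key
  convert key using 3 <;> ring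

lemma cs2 (cH cL d1 d2 : ℝ) (hcH : 0 < cH) (hcL : 0 < cL) :
    cH * |d1| + cL * |d2| ≤ Real.sqrt (cH ^ 2 + cL ^ 2) * Real.sqrt (d1 ^ 2 + d2 ^ 2) := by
  have hsq : (cH * |d1| + cL * |d2|) ^ 2 ≤ (cH ^ 2 + cL ^ 2) * (d1 ^ 2 + d2 ^ 2) := by
    nlinarith [sq_nonneg (cH * |d2| - cL * |d1|), sq_abs d1, sq_abs d2,
      abs_nonneg d1, abs_nonneg d2]
  calc cH * |d1| + cL * |d2|
      = Real.sqrt ((cH * |d1| + cL * |d2|) ^ 2) := (Real.sqrt_sq (by positivity)).symm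
    _ ≤ Real.sqrt ((cH ^ 2 + cL ^ 2) * (d1 ^ 2 + d2 ^ 2)) := Real.sqrt_le_sqrt hsq
    _ = _ := Real.sqrt_mul (by positivity) _

theorem G_lipschitz_in_r (aH aL bH bL cH cL : ℝ)
    (hbH : 0 < bH) (hbL : 0 < bL) (hcH : 0 < cH) (hcL : 0 < cL)
    (lo hi : ℝ) (hlo : 0 < lo) (hlohi : lo ≤ hi)
    (p r r' : ℝ × ℝ) (hp : InP2 lo hi p) (hr : InP2 lo hi r) (hr' : InP2 lo hi r') :
    |GrH aH aL bH bL cH cL p r - GrH aH aL bH bL cH cL p r'| ≤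
      lr cH cL * Real.sqrt (norm2sq (r - r')) ∧
    |GrL aH aL bH bL cH cL p r - GrL aH aL bH bL cH cL p r'| ≤
      lr cH cL * Real.sqrt (norm2sq (r - r')) := by
  set d1 := r.1 - r'.1 with hd1
  set d2 := r.2 - r'.2 with hd2
  set A1 := util aH bH cH p.1 r'.1 with hA1
  set A2 := util aL bL cL p.2 r'.2 with hA2
  have hu1 : util aH bH cH p.1 r.1 = A1 + cH * d1 := by simp [util, hA1, hd1]; ring
  have hu2 : util aL bL cL p.2 r.2 = A2 + cL * d2 := by simp [util, hA2, hd2]; ring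
  have hk1 : |cH * d1| = cH * |d1| := by rw [abs_mul, abs_of_pos hcH]
  have hk2 : |cL * d2| = cL * |d2| := by rw [abs_mul, abs_of_pos hcL]
  have hfin : (cH * |d1| + cL * |d2|) / 4 ≤ lr cH cL * Real.sqrt (norm2sq (r - r')) := by
    have hn : norm2sq (r - r') = d1 ^ 2 + d2 ^ 2 := by
      simp [norm2sq, hd1, hd2, Prod.fst_sub, Prod.snd_sub]
    rw [hn, lr]
    have := cs2 cH cL d1 d2 hcH hcL
    linarith
  constructor
  · have hGH : GrH aH aL bH bL cH cL p r - GrH aH aL bH bL cH cL p r' =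
        demH aH aL bH bL cH cL p r - demH aH aL bH bL cH cL p r' := by
      simp [GrH]
    rw [hGH]
    have h := mnl_diff_bound A1 A2 (cH * d1) (cL * d2)
    rw [hk1, hk2] at h
    refine le_trans ?_ hfin
    simpa [demH, hu1, hu2] using h
  · have hGL : GrL aH aL bH bL cH cL p r - GrL aH aL bH bL cH cL p r' =
        demL aH aL bH bL cH cL p r - demL aH aL bH bL cH cL p r' := by
      simp [GrL]
    rw [hGL]
    have h := mnl_diff_bound A2 A1 (cL * d2) (cH * d1)
    rw [hk1, hk2] at h
    refine le_trans (b := (cL * |d2| + cH * |d1|) / 4) ?_ ?_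
    · have e1 : demL aH aL bH bL cH cL p r =
          Real.exp (A2 + cL * d2) / (1 + Real.exp (A2 + cL * d2) + Real.exp (A1 + cH * d1)) := by
        rw [demL, hu1, hu2]; ring_nf
      have e2 : demL aH aL bH bL cH cL p r' =
          Real.exp A2 / (1 + Real.exp A2 + Real.exp A1) := by
        rw [demL, ← hA1, ← hA2]; ring_nf
      rw [e1, e2]; exact h
    · linarith
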